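/- Strong duality for the affine surrogate: let ℓ̃(s) = ℓ₀ + cᵀs be affine, m ≥ 1, ρ ∈ (0,1]. Then max over s ∈ S_ρ of ℓ̃(s) equals inf over λ ≥ 0 of [ℓ₀ + λρ + ∑ₑ max(cₑ − λ/m, 0)], where S_ρ = {s ∈ [0,1]^m : (1/m)∑ₑ sₑ ≤ ρ}. -/

import Mathlib

/-- Strong duality for the affine surrogate. -/
theorem strong_duality_affine_surrogate (m : ℕ) (hm : 0 < m) (ℓ₀ : ℝ) (c : Fin m → ℝ)
    (ρ : ℝ) (hρ : ρ ∈ Set.Ioc (0:ℝ) 1) :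
    sSup ((fun s : Fin m → ℝ => ℓ₀ + ∑ e, c e * s e) ''
        {s : Fin m → ℝ | (∀ e, s e ∈ Set.Icc (0:ℝ) 1) ∧ (1 / m) * ∑ e, s e ≤ ρ}) =
      sInf ((fun lam : ℝ => ℓ₀ + lam * ρ + ∑ e, max (c e - lam / m) 0) ''
        {lam : ℝ | 0 ≤ lam}) := by
  classical
  obtain ⟨hρ0, hρ1⟩ := hρ
  have hm' : (0:ℝ) < m := by exact_mod_cast hm
  have hmne : (m:ℝ) ≠ 0 := ne_of_gt hm'
  set f : (Fin m → ℝ) → ℝ := fun s => ℓ₀ + ∑ e, c e * s e with hf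
  set g : ℝ → ℝ := fun lam => ℓ₀ + lam * ρ + ∑ e, max (c e - lam / m) 0 with hg
  set S : Set (Fin m → ℝ) :=
    {s : Fin m → ℝ | (∀ e, s e ∈ Set.Icc (0:ℝ) 1) ∧ (1 / m) * ∑ e, s e ≤ ρ} with hS
  -- weak duality
  have weak : ∀ s ∈ S, ∀ lam : ℝ, 0 ≤ lam → f s ≤ g lam := by
    intro s hs lam hlam
    obtain ⟨hs01, hsum⟩ := hs
    have hsum' : ∑ e, s e ≤ ρ * m := by
      have h := mul_le_mul_of_nonneg_left hsum hm'.le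
      have h2 : (m:ℝ) * (1 / m * ∑ e, s e) = ∑ e, s e := by field_simp
      rw [h2] at h
      linarith
    have key : ∀ e, c e * s e ≤ max (c e - lam / m) 0 + (lam / m) * s e := by
      intro e
      obtain ⟨h0, h1⟩ := hs01 e
      rcases le_or_gt (c e) (lam / m) with h | h
      · have : c e * s e ≤ (lam / m) * s e := mul_le_mul_of_nonneg_right h h0
        have := le_max_right (c e - lam / m) 0
        linarith
      · have hmax : max (c e - lam / m) 0 = c e - lam / m := max_eq_left (by linarith)
        rw [hmax]
        nlinarith
    have h1 : ∑ e, c e * s e ≤ ∑ e, (max (c e - lam / m) 0 + (lam / m) * s e) :=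
      Finset.sum_le_sum fun e _ => key e
    rw [Finset.sum_add_distrib, ← Finset.mul_sum] at h1
    have h2 : (lam / m) * ∑ e, s e ≤ lam * ρ := by
      have : (lam / m) * ∑ e, s e ≤ (lam / m) * (ρ * m) :=
        mul_le_mul_of_nonneg_left hsum' (by positivity)
      calc (lam / m) * ∑ e, s e ≤ (lam / m) * (ρ * m) := this
        _ = lam * ρ := by field_simp
    simp only [hf, hg]
    linarith
  -- nonemptiness of primal and dual
  have hS0 : (0 : Fin m → ℝ) ∈ S := by
    constructor
    · intro e; simp [Set.mem_Icc]
    · simp; positivity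
  have hPne : (f '' S).Nonempty := ⟨f 0, Set.mem_image_of_mem f hS0⟩
  have hDne : (g '' {lam : ℝ | 0 ≤ lam}).Nonempty :=
    ⟨g 0, Set.mem_image_of_mem g (by norm_num : (0:ℝ) ∈ {lam : ℝ | 0 ≤ lam})⟩
  have hPbdd : BddAbove (f '' S) := by
    refine ⟨g 0, ?_⟩
    rintro x ⟨s, hs, rfl⟩
    exact weak s hs 0 le_rfl
  have hDbdd : BddBelow (g '' {lam : ℝ | 0 ≤ lam}) := by
    refine ⟨f 0, ?_⟩
    rintro y ⟨lam, hlam, rfl⟩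
    exact weak 0 hS0 lam hlam
  -- the candidate set for the optimal dual variable
  set cand : Finset ℝ := insert 0 (Finset.image (fun e => (m:ℝ) * c e) Finset.univ) with hcand
  set F : Finset ℝ :=
    cand.filter (fun lam => 0 ≤ lam ∧
      ((Finset.univ.filter (fun e => lam / m < c e)).card : ℝ) ≤ ρ * m) with hF
  have hFne : F.Nonempty := by
    have hcne : cand.Nonempty := ⟨0, Finset.mem_insert_self _ _⟩
    refine ⟨cand.max' hcne, ?_⟩
    rw [hF, Finset.mem_filter]
    refine ⟨Finset.max'_mem _ _, ?_, ?_⟩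
    · exact le_trans (le_refl 0) (Finset.le_max' _ 0 (Finset.mem_insert_self _ _))
    · have : (Finset.univ.filter (fun e => cand.max' hcne / m < c e)) = ∅ := by
        rw [Finset.filter_eq_empty_iff]
        intro e _
        intro hlt
        have hmem : (m:ℝ) * c e ∈ cand := by
          rw [hcand]
          exact Finset.mem_insert_of_mem (Finset.mem_image_of_mem _ (Finset.mem_univ e))
        have := Finset.le_max' cand _ hmem
        rw [div_lt_iff₀ hm'] at hlt
        nlinarith
      rw [this]
      simp
      positivity
  set lam₀ : ℝ := F.min' hFne with hlam₀
  have hlam₀F : lam₀ ∈ F := Finset.min'_mem _ _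
  rw [hF, Finset.mem_filter] at hlam₀F
  obtain ⟨hlam₀cand, hlam₀0, hlam₀N⟩ := hlam₀F
  set A : Finset (Fin m) := Finset.univ.filter (fun e => lam₀ / m < c e) with hA
  set B : Finset (Fin m) := Finset.univ.filter (fun e => c e = lam₀ / m) with hB
  have hAcard : (A.card : ℝ) ≤ ρ * m := hlam₀N
  -- if lam₀ > 0 then A.card + B.card > ρ m
  have hBpos : lam₀ ≠ 0 → ρ * m < A.card + B.card := by
    intro hne
    have hlt : 0 < lam₀ := lt_of_le_of_ne hlam₀0 (Ne.symm hne)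
    set F' : Finset ℝ := cand.filter (fun μ => 0 ≤ μ ∧ μ < lam₀) with hF'
    have hF'ne : F'.Nonempty := by
      refine ⟨0, ?_⟩
      rw [hF', Finset.mem_filter]
      exact ⟨Finset.mem_insert_self _ _, le_refl 0, hlt⟩
    set lh : ℝ := F'.max' hF'ne with hlh
    have hlhF' : lh ∈ F' := Finset.max'_mem _ _
    rw [hF', Finset.mem_filter] at hlhF'
    obtain ⟨hlhcand, hlh0, hlhlt⟩ := hlhF'
    have hNhat : ρ * m < ((Finset.univ.filter (fun e => lh / m < c e)).card : ℝ) := by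
      by_contra hcon
      push_neg at hcon
      have : lh ∈ F := by
        rw [hF, Finset.mem_filter]
        exact ⟨hlhcand, hlh0, hcon⟩
      have := Finset.min'_le F lh this
      rw [← hlam₀] at this
      linarith
    have hsub : Finset.univ.filter (fun e => lh / m < c e) ⊆ A ∪ B := by
      intro e he
      rw [Finset.mem_filter] at he
      obtain ⟨_, he⟩ := he
      by_contra hcon
      rw [Finset.mem_union, hA, hB, Finset.mem_filter, Finset.mem_filter] at hcon
      push_neg at hcon
      obtain ⟨h1, h2⟩ := hcon
      have h1 := h1 (Finset.mem_univ e)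
      have h2 := h2 (Finset.mem_univ e)
      have hclt : c e < lam₀ / m := lt_of_le_of_ne h1 h2
      have hmc : (m:ℝ) * c e ∈ F' := by
        rw [hF', Finset.mem_filter]
        refine ⟨?_, ?_, ?_⟩
        · exact Finset.mem_insert_of_mem (Finset.mem_image_of_mem _ (Finset.mem_univ e))
        · nlinarith [he, hlh0, (div_lt_iff₀ hm').mp he]
        · have := (lt_div_iff₀ hm').mp hclt
          nlinarith
      have := Finset.le_max' F' _ hmc
      rw [← hlh] at this
      have he' := (div_lt_iff₀ hm').mp he
      nlinarith
    have hcards : (Finset.univ.filter (fun e => lh / m < c e)).card ≤ A.card + B.card :=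
      le_trans (Finset.card_le_card hsub) (Finset.card_union_le _ _)
    calc ρ * m < ((Finset.univ.filter (fun e => lh / m < c e)).card : ℝ) := hNhat
      _ ≤ A.card + B.card := by exact_mod_cast hcards
  -- define the optimal primal point
  have hABdisj : ∀ e, e ∈ A → e ∉ B := by
    intro e heA heB
    rw [hA, Finset.mem_filter] at heA
    rw [hB, Finset.mem_filter] at heB
    exact absurd heB.2 (ne_of_gt heA.2)
  have hBc : lam₀ ≠ 0 → (0:ℝ) < B.card := by
    intro h
    have hb := hBpos h
    have h0 : (0:ℝ) ≤ B.card := Nat.cast_nonneg _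
    rcases h0.lt_or_eq with h' | h'
    · exact h'
    · exfalso; rw [← h'] at hb; linarith
  obtain ⟨t, ht0, ht1, hkey, hbudget⟩ :
      ∃ t : ℝ, 0 ≤ t ∧ t ≤ 1 ∧
        (lam₀ / m * ((B.card : ℝ) * t) = lam₀ * ρ - lam₀ / m * A.card) ∧
        ((A.card : ℝ) + B.card * t ≤ ρ * m) := by
    rcases eq_or_ne lam₀ 0 with h | h
    · refine ⟨0, le_refl 0, zero_le_one, by rw [h]; ring, by simpa using hAcard⟩
    · have hb := hBpos h
      have hBc' : (0:ℝ) < B.card := hBc h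
      have h1 : (B.card:ℝ) * ((ρ * m - A.card) / B.card) = ρ * m - A.card := by
        rw [mul_comm, div_mul_cancel₀ _ (ne_of_gt hBc')]
      refine ⟨(ρ * m - A.card) / B.card, ?_, ?_, ?_, ?_⟩
      · apply div_nonneg _ (le_of_lt hBc'); linarith
      · rw [div_le_one hBc']; linarith
      · rw [h1]
        have h3 : lam₀ / m * (m:ℝ) = lam₀ := div_mul_cancel₀ _ hmne
        linear_combination ρ * h3
      · rw [h1]; linarith
  set s : Fin m → ℝ := fun e => (if e ∈ A then (1:ℝ) else 0) + (if e ∈ B then t else 0)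
    with hs
  have hsS : s ∈ S := by
    constructor
    · intro e
      have hse : s e = (if e ∈ A then (1:ℝ) else 0) + (if e ∈ B then t else 0) := rfl
      rw [Set.mem_Icc, hse]
      by_cases heA : e ∈ A
      · have heB := hABdisj e heA
        rw [if_pos heA, if_neg heB]
        norm_num
      · by_cases heB : e ∈ B
        · rw [if_neg heA, if_pos heB]
          constructor
          · linarith
          · linarith
        · rw [if_neg heA, if_neg heB]
          norm_num
    · have hsum : ∑ e, s e = (A.card : ℝ) + B.card * t := by
        rw [hs]
        simp only
        rw [Finset.sum_add_distrib]
        congr 1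
        · rw [Finset.sum_ite_mem, Finset.univ_inter, Finset.sum_const]
          simp
        · rw [Finset.sum_ite_mem, Finset.univ_inter, Finset.sum_const]
          simp [mul_comm]
      rw [hsum]
      rw [div_mul_eq_mul_div, div_le_iff₀ hm']
      · linarith [hbudget]
  -- the value equality
  have hBsum : ∑ e ∈ B, c e = (B.card : ℝ) * (lam₀ / m) := by
    have hc : ∀ e ∈ B, c e = lam₀ / m := by
      intro e he
      rw [hB, Finset.mem_filter] at he
      exact he.2
    rw [Finset.sum_congr rfl hc, Finset.sum_const, nsmul_eq_mul]
  have hmaxsum : ∑ e, max (c e - lam₀ / m) 0 = ∑ e ∈ A, (c e - lam₀ / m) := by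
    rw [hA, Finset.sum_filter]
    apply Finset.sum_congr rfl
    intro e _
    by_cases h : lam₀ / m < c e
    · rw [if_pos h, max_eq_left (by linarith : (0:ℝ) ≤ c e - lam₀ / m)]
    · rw [if_neg h, max_eq_right (by linarith [not_lt.mp h] : c e - lam₀ / m ≤ (0:ℝ))]
  have hval : f s = g lam₀ := by
    have h1 : ∀ e, c e * s e = (if e ∈ A then c e else 0) + (if e ∈ B then c e * t else 0) := by
      intro e
      have hse : s e = (if e ∈ A then (1:ℝ) else 0) + (if e ∈ B then t else 0) := rfl
      rw [hse]
      by_cases heA : e ∈ A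
      · have heB := hABdisj e heA
        rw [if_pos heA, if_neg heB, if_pos heA, if_neg heB]; ring
      · by_cases heB : e ∈ B
        · rw [if_neg heA, if_pos heB, if_neg heA, if_pos heB]; ring
        · rw [if_neg heA, if_neg heB, if_neg heA, if_neg heB]; ring
    have hcs : ∑ e, c e * s e = (∑ e ∈ A, c e) + (B.card : ℝ) * (lam₀ / m) * t := by
      rw [Finset.sum_congr rfl (fun e _ => h1 e), Finset.sum_add_distrib,
        Finset.sum_ite_mem, Finset.sum_ite_mem, Finset.univ_inter, Finset.univ_inter,
        ← Finset.sum_mul, hBsum]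
    have hsub : ∑ e ∈ A, (c e - lam₀ / m) = (∑ e ∈ A, c e) - (A.card : ℝ) * (lam₀ / m) := by
      rw [Finset.sum_sub_distrib, Finset.sum_const, nsmul_eq_mul]
    simp only [hf, hg]
    rw [hcs, hmaxsum, hsub]
    have h2 : (B.card : ℝ) * (lam₀ / m) * t = lam₀ / m * ((B.card : ℝ) * t) := by ring
    rw [h2, hkey]
    ring
  -- conclude
  apply le_antisymm
  · apply csSup_le hPne
    rintro x ⟨sx, hsx, rfl⟩
    apply le_csInf hDne
    rintro y ⟨lam, hlam, rfl⟩
    exact weak sx hsx lam hlam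
  · calc sInf (g '' {lam : ℝ | 0 ≤ lam}) ≤ g lam₀ :=
        csInf_le hDbdd (Set.mem_image_of_mem g hlam₀0)
      _ = f s := hval.symm
      _ ≤ sSup (f '' S) := le_csSup hPbdd (Set.mem_image_of_mem f hsS)
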